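/- If a finite set of Wang tiles admits a tiling of the plane, then there exists a tiling f of the plane by this tileset such that every tile that appears somewhere in f appears at least twice in some row of f. -/
import Mathlib


structure WangTile (C : Type) where
  e : C
  w : C
  n : C
  s : C
deriving DecidableEq

def IsTiling {C : Type} (τ : Set (WangTile C)) (f : ℤ → ℤ → WangTile C) : Prop :=
  (∀ i j, f i j ∈ τ) ∧ (∀ i j, (f i j).e = (f (i+1) j).w) ∧
    (∀ i j, (f i j).n = (f i (j+1)).s)

section Aux

variable {C : Type}

instance : TopologicalSpace (WangTile C) := ⊥

instance : DiscreteTopology (WangTile C) := ⟨rfl⟩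

instance [Fintype C] : Finite (WangTile C) :=
  Finite.of_injective (fun t => (t.e, t.w, t.n, t.s)) (by
    rintro ⟨a, b, c, d⟩ ⟨a', b', c', d'⟩ h
    simpa using h)

/-- Shift of a configuration by a vector. -/
def shiftW (v : ℤ × ℤ) (f : ℤ → ℤ → WangTile C) : ℤ → ℤ → WangTile C :=
  fun i j => f (i + v.1) (j + v.2)

lemma continuous_eval (i j : ℤ) :
    Continuous (fun f : ℤ → ℤ → WangTile C => f i j) :=
  (continuous_apply j).comp (continuous_apply i)

lemma continuous_shiftW (v : ℤ × ℤ) :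
    Continuous (shiftW (C := C) v) := by
  refine continuous_pi fun i => continuous_pi fun j => ?_
  exact continuous_eval _ _

lemma shiftW_zero (f : ℤ → ℤ → WangTile C) : shiftW (0, 0) f = f := by
  funext i j; simp [shiftW]

lemma shiftW_shiftW (u v : ℤ × ℤ) (f : ℤ → ℤ → WangTile C) :
    shiftW v (shiftW u f) = shiftW (u + v) f := by
  funext i j
  simp only [shiftW, Prod.fst_add, Prod.snd_add]
  ring_nf

lemma isTiling_shiftW {τ : Set (WangTile C)} {f} (hf : IsTiling τ f) (v : ℤ × ℤ) :
    IsTiling τ (shiftW v f) := by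
  obtain ⟨h1, h2, h3⟩ := hf
  refine ⟨fun i j => h1 _ _, fun i j => ?_, fun i j => ?_⟩
  · have := h2 (i + v.1) (j + v.2)
    simp only [shiftW]
    rw [show i + 1 + v.1 = i + v.1 + 1 by ring]
    exact this
  · have := h3 (i + v.1) (j + v.2)
    simp only [shiftW]
    rw [show j + 1 + v.2 = j + v.2 + 1 by ring]
    exact this

lemma isClosed_tilings [Fintype C] [DecidableEq C] (τ : Set (WangTile C)) :
    IsClosed {f : ℤ → ℤ → WangTile C | IsTiling τ f} := by
  have : {f : ℤ → ℤ → WangTile C | IsTiling τ f} =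
      (⋂ (i : ℤ) (j : ℤ), {f : ℤ → ℤ → WangTile C | f i j ∈ τ}) ∩
      ((⋂ (i : ℤ) (j : ℤ), {f : ℤ → ℤ → WangTile C |
          (fun p : WangTile C × WangTile C => p.1.e = p.2.w) (f i j, f (i+1) j)}) ∩
       (⋂ (i : ℤ) (j : ℤ), {f : ℤ → ℤ → WangTile C |
          (fun p : WangTile C × WangTile C => p.1.n = p.2.s) (f i j, f i (j+1))})) := by
    ext f
    simp only [IsTiling, Set.mem_setOf_eq, Set.mem_inter_iff, Set.mem_iInter]
  rw [this]
  refine IsClosed.inter ?_ (IsClosed.inter ?_ ?_)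
  · exact isClosed_iInter fun i => isClosed_iInter fun j =>
      (isClosed_discrete τ).preimage (continuous_eval i j)
  · exact isClosed_iInter fun i => isClosed_iInter fun j =>
      (isClosed_discrete {p : WangTile C × WangTile C | p.1.e = p.2.w}).preimage
        ((continuous_eval i j).prodMk (continuous_eval (i+1) j))
  · exact isClosed_iInter fun i => isClosed_iInter fun j =>
      (isClosed_discrete {p : WangTile C × WangTile C | p.1.n = p.2.s}).preimage
        ((continuous_eval i j).prodMk (continuous_eval i (j+1)))

end Aux

theorem stmt0 {C : Type} [Fintype C] [DecidableEq C] (τ : Finset (WangTile C))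
    (h : ∃ f, IsTiling (↑τ : Set (WangTile C)) f) :
    ∃ f, IsTiling (↑τ : Set (WangTile C)) f ∧
      ∀ t, (∃ i j, f i j = t) → ∃ j i i', i ≠ i' ∧ f i j = t ∧ f i' j = t := by
  classical
  obtain ⟨f0, hf0⟩ := h
  set Y : Set (ℤ → ℤ → WangTile C) := {f | IsTiling (↑τ : Set (WangTile C)) f} with hY
  set S : Set (Set (ℤ → ℤ → WangTile C)) :=
    {K | K.Nonempty ∧ IsClosed K ∧ K ⊆ Y ∧ ∀ v : ℤ × ℤ, ∀ f ∈ K, shiftW v f ∈ K} with hS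
  have hYS : Y ∈ S := ⟨⟨f0, hf0⟩, isClosed_tilings _, subset_rfl,
    fun v f hf => isTiling_shiftW hf v⟩
  -- Zorn: a minimal nonempty closed shift-invariant subset of the tiling space
  have hzorn : ∀ c ⊆ S, IsChain (· ⊆ ·) c → c.Nonempty →
      ∃ lb ∈ S, ∀ s ∈ c, lb ⊆ s := by
    intro c hcS hchain hcne
    refine ⟨⋂₀ c, ⟨?_, ?_, ?_, ?_⟩, fun s hs => Set.sInter_subset_of_mem hs⟩
    · -- nonempty, by compactness
      have hdir : Directed (· ⊇ ·) (fun s : c => (s : Set (ℤ → ℤ → WangTile C))) := by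
        rintro ⟨s, hs⟩ ⟨t, ht⟩
        rcases hchain.total hs ht with h' | h'
        · exact ⟨⟨s, hs⟩, le_refl _, h'⟩
        · exact ⟨⟨t, ht⟩, h', le_refl _⟩
      have : Nonempty c := hcne.to_subtype
      have := IsCompact.nonempty_iInter_of_directed_nonempty_isCompact_isClosed
        (fun s : c => (s : Set (ℤ → ℤ → WangTile C))) hdir
        (fun s => (hcS s.2).1) (fun s => (hcS s.2).2.1.isCompact)
        (fun s => (hcS s.2).2.1)
      rwa [Set.sInter_eq_iInter]
    · exact isClosed_sInter fun s hs => (hcS hs).2.1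
    · obtain ⟨s, hs⟩ := hcne
      exact (Set.sInter_subset_of_mem hs).trans (hcS hs).2.2.1
    · intro v f hf
      exact Set.mem_sInter.2 fun s hs => (hcS hs).2.2.2 v f (Set.mem_sInter.1 hf s hs)
  obtain ⟨K, -, hKmin⟩ := zorn_superset_nonempty S hzorn Y hYS
  have hKS : K ∈ S := hKmin.1
  obtain ⟨hKne, hKcl, hKY, hKinv⟩ := hKS
  obtain ⟨g, hg⟩ := hKne
  -- every configuration in K has dense orbit in K
  have horb : ∀ x ∈ K, K ⊆ closure {y | ∃ v : ℤ × ℤ, y = shiftW v x} := by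
    intro x hx
    set O : Set (ℤ → ℤ → WangTile C) := {y | ∃ v : ℤ × ℤ, y = shiftW v x} with hO
    have hOK : O ⊆ K := by rintro y ⟨v, rfl⟩; exact hKinv v x hx
    have hcl : closure O ∈ S := by
      refine ⟨⟨x, subset_closure ⟨(0, 0), (shiftW_zero x).symm⟩⟩, isClosed_closure,
        (closure_minimal hOK hKcl).trans hKY, ?_⟩
      intro v f hf
      have h1 : shiftW v '' closure O ⊆ closure (shiftW v '' O) :=
        image_closure_subset_closure_image (continuous_shiftW v)
      have h2 : shiftW v '' O ⊆ O := by
        rintro y ⟨z, ⟨u, rfl⟩, rfl⟩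
        exact ⟨u + v, shiftW_shiftW u v x⟩
      exact closure_mono h2 (h1 ⟨f, hf, rfl⟩)
    exact hKmin.2 hcl (closure_minimal hOK hKcl)
  refine ⟨g, hKY hg, ?_⟩
  rintro t ⟨p, q, hpq⟩
  -- cover K by cylinders "t appears at position v"
  set V : ℤ × ℤ → Set (ℤ → ℤ → WangTile C) := fun v => {y | y v.1 v.2 = t} with hV
  have hVopen : ∀ v, IsOpen (V v) := fun v =>
    (isOpen_discrete {t}).preimage (continuous_eval v.1 v.2)
  have hcover : K ⊆ ⋃ v : ℤ × ℤ, V v := by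
    intro x hx
    have hgcl : g ∈ closure {y | ∃ v : ℤ × ℤ, y = shiftW v x} := horb x hx hg
    have hU : IsOpen {y : ℤ → ℤ → WangTile C | y p q = t} :=
      (isOpen_discrete {t}).preimage (continuous_eval p q)
    obtain ⟨y, hy1, u, rfl⟩ :=
      (mem_closure_iff.1 hgcl) _ hU hpq
    exact Set.mem_iUnion.2 ⟨(p + u.1, q + u.2), hy1⟩
  obtain ⟨F, hF⟩ := (hKcl.isCompact.elim_finite_subcover V hVopen hcover)
  -- for every horizontal translate, t appears at a position from F
  have hmain : ∀ n : ℤ, ∃ v ∈ F, g (v.1 + n) v.2 = t := by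
    intro n
    have : shiftW (n, 0) g ∈ K := hKinv (n, 0) g hg
    obtain ⟨v, hvF, hv⟩ := Set.mem_iUnion₂.1 (hF this)
    refine ⟨v, hvF, ?_⟩
    have : (shiftW (n, 0) g) v.1 v.2 = t := hv
    simpa [shiftW] using this
  choose φ hφF hφ using hmain
  have : ∃ n n' : ℤ, n ≠ n' ∧ (⟨φ n, hφF n⟩ : F) = ⟨φ n', hφF n'⟩ :=
    Finite.exists_ne_map_eq_of_infinite (fun n : ℤ => (⟨φ n, hφF n⟩ : F))
  obtain ⟨n, n', hnn', heq⟩ := this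
  have hv : φ n = φ n' := congrArg Subtype.val heq
  refine ⟨(φ n).2, (φ n).1 + n, (φ n).1 + n', ?_, hφ n, ?_⟩
  · intro hcon; apply hnn'; omega
  · rw [hv]; exact hφ n'
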